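/- For every natural number N there exists ℓ₀ ∈ ℕ such that for all ℓ ≥ ℓ₀: every bipartite graph A with v(A) ≤ 2ℓ + N and e(A) ≥ ℓ² − N contains a subgraph (a subset of its vertices together with all edges of A between them) that is almost ℓ-complete. -/

import Mathlib

noncomputable section

/-- A bipartite graph: two disjoint finite vertex sets `L`, `R`
and a set of edges `E ⊆ L × R`. -/
structure BipGraph (V : Type) [DecidableEq V] where
  L : Finset V
  R : Finset V
  disj : Disjoint L R
  E : Finset (V × V)
  E_sub : E ⊆ L ×ˢ R

namespace BipGraph

variable {V : Type} [DecidableEq V]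

/-- the vertex set -/
def verts (A : BipGraph V) : Finset V := A.L ∪ A.R

/-- `v A` is the number of vertices of `A` -/
def v (A : BipGraph V) : ℕ := A.verts.card

/-- `e A` is the number of edges of `A` -/
def e (A : BipGraph V) : ℕ := A.E.card

/-- the underlying simple graph on the vertex set of `A` -/
def graph (A : BipGraph V) : SimpleGraph {x : V // x ∈ A.verts} where
  Adj x y := (x.1, y.1) ∈ A.E ∨ (y.1, x.1) ∈ A.E
  symm := by
    constructor
    intro x y h
    exact h.symm
  loopless := by
    constructor
    intro x h
    have hx : (x.1, x.1) ∈ A.E := by rcases h with h | h <;> exact h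
    have hmem := A.E_sub hx
    rw [Finset.mem_product] at hmem
    exact Finset.disjoint_left.mp A.disj hmem.1 hmem.2

/-- `CC A` is the number of connected components of `A` (isolated vertices count). -/
def CC (A : BipGraph V) : ℕ := Nat.card A.graph.ConnectedComponent

/-- `k A = v A - CC A` -/
def k (A : BipGraph V) : ℕ := A.v - A.CC

/-- `A` is complete if every left-right pair is an edge. -/
def Complete (A : BipGraph V) : Prop := A.E = A.L ×ˢ A.R

/-- `A` is balanced if its parts differ in size by at most one. -/
def Balanced (A : BipGraph V) : Prop := ((A.L.card : ℤ) - (A.R.card : ℤ)).natAbs ≤ 1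

/-- `A` is null if it has no edges. -/
def Null (A : BipGraph V) : Prop := A.E = ∅

/-- the induced subgraph of `A` on a set `S` of vertices: the vertices of `A`
belonging to `S`, together with all edges of `A` between them. -/
def induce (A : BipGraph V) (S : Finset V) : BipGraph V where
  L := A.L ∩ S
  R := A.R ∩ S
  disj := A.disj.mono Finset.inter_subset_left Finset.inter_subset_left
  E := A.E.filter (fun p => p.1 ∈ S ∧ p.2 ∈ S)
  E_sub := by
    intro p hp
    rw [Finset.mem_filter] at hp
    have hmem := A.E_sub hp.1
    rw [Finset.mem_product] at hmem ⊢
    exact ⟨Finset.mem_inter.mpr ⟨hmem.1, hp.2.1⟩, Finset.mem_inter.mpr ⟨hmem.2, hp.2.2⟩⟩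

/-- the degree of a vertex: the number of edges incident to it -/
def deg (A : BipGraph V) (x : V) : ℕ :=
  (A.E.filter (fun p => p.1 = x ∨ p.2 = x)).card

/-- `A` is almost `ℓ`-complete: the two parts have sizes within `0.01 * ℓ` of `ℓ`,
and every vertex has degree at least `0.9 * ℓ`. -/
def AlmostComplete (ℓ : ℕ) (A : BipGraph V) : Prop :=
  |(A.L.card : ℝ) - (ℓ : ℝ)| ≤ 0.01 * ℓ ∧ |(A.R.card : ℝ) - (ℓ : ℝ)| ≤ 0.01 * ℓ ∧
  ∀ x ∈ A.verts, (0.9 : ℝ) * ℓ ≤ (A.deg x : ℝ)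

/-- the disjoint union of two vertex-disjoint bipartite graphs -/
def disjUnion (A B : BipGraph V) (h : Disjoint A.verts B.verts) : BipGraph V where
  L := A.L ∪ B.L
  R := A.R ∪ B.R
  disj := by
    have h1 : Disjoint A.L B.R := h.mono Finset.subset_union_left Finset.subset_union_right
    have h2 : Disjoint B.L A.R := h.symm.mono Finset.subset_union_left Finset.subset_union_right
    rw [Finset.disjoint_union_left, Finset.disjoint_union_right, Finset.disjoint_union_right]
    exact ⟨⟨A.disj, h1⟩, ⟨h2, B.disj⟩⟩
  E := A.E ∪ B.E
  E_sub := by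
    intro p hp
    rw [Finset.mem_union] at hp
    rw [Finset.mem_product]
    rcases hp with hp | hp
    · have := A.E_sub hp; rw [Finset.mem_product] at this
      exact ⟨Finset.mem_union_left _ this.1, Finset.mem_union_left _ this.2⟩
    · have := B.E_sub hp; rw [Finset.mem_product] at this
      exact ⟨Finset.mem_union_right _ this.1, Finset.mem_union_right _ this.2⟩

end BipGraph

/-- `estar (2*b) = b^2` and `estar (2*b+1) = b*(b+1)`; i.e. `⌊c/2⌋ * ⌈c/2⌉`. -/
def estar (c : ℕ) : ℕ := (c / 2) * ((c + 1) / 2)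

namespace BipGraph
variable {V : Type} [DecidableEq V]

lemma e_le_mul (A : BipGraph V) (S : Finset V) :
    (A.induce S).e ≤ (A.L ∩ S).card * (A.R ∩ S).card := by
  rw [← Finset.card_product]
  exact Finset.card_le_card (A.induce S).E_sub

lemma deg_eq_left (A : BipGraph V) (S : Finset V) (x : V) (hx : x ∈ A.L) :
    (A.induce S).deg x = ((A.induce S).E.filter (fun p => p.1 = x)).card := by
  unfold BipGraph.deg
  congr 1
  apply Finset.filter_congr
  intro p hp
  have hm := (A.induce S).E_sub hp
  rw [Finset.mem_product] at hm
  constructor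
  · rintro (h | h)
    · exact h
    · exfalso
      have hp2 : p.2 ∈ A.R := Finset.mem_of_mem_inter_left hm.2
      exact Finset.disjoint_left.mp A.disj hx (h ▸ hp2)
  · exact Or.inl

lemma deg_eq_right (A : BipGraph V) (S : Finset V) (x : V) (hx : x ∈ A.R) :
    (A.induce S).deg x = ((A.induce S).E.filter (fun p => p.2 = x)).card := by
  unfold BipGraph.deg
  congr 1
  apply Finset.filter_congr
  intro p hp
  have hm := (A.induce S).E_sub hp
  rw [Finset.mem_product] at hm
  constructor
  · rintro (h | h)
    · exfalso
      have hp1 : p.1 ∈ A.L := Finset.mem_of_mem_inter_left hm.1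
      exact Finset.disjoint_right.mp A.disj hx (h ▸ hp1)
    · exact h
  · exact Or.inr

end BipGraph
namespace BipGraph
variable {V : Type} [DecidableEq V]

lemma row_left (A : BipGraph V) (S : Finset V) (x : V) (hxL : x ∈ A.L) (hxS : x ∈ S) :
    ((A.induce S).e : ℤ) ≤ ((A.induce S).deg x : ℤ)
      + (((A.L ∩ S).card : ℤ) - 1) * ((A.R ∩ S).card : ℤ) := by
  have hsplit := Finset.card_filter_add_card_filter_not
    (s := (A.induce S).E) (p := fun p => p.1 = x)
  have hrest : ((A.induce S).E.filter (fun p => ¬ p.1 = x)) ⊆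
      ((A.L ∩ S).erase x) ×ˢ (A.R ∩ S) := by
    intro p hp
    rw [Finset.mem_filter] at hp
    have hm := (A.induce S).E_sub hp.1
    rw [Finset.mem_product] at hm ⊢
    exact ⟨Finset.mem_erase.mpr ⟨hp.2, hm.1⟩, hm.2⟩
  have hmemx : x ∈ A.L ∩ S := Finset.mem_inter.mpr ⟨hxL, hxS⟩
  have hpos : 1 ≤ (A.L ∩ S).card := Finset.card_pos.mpr ⟨x, hmemx⟩
  have h2 : ((A.induce S).E.filter (fun p => ¬ p.1 = x)).card ≤
      ((A.L ∩ S).card - 1) * (A.R ∩ S).card := by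
    calc ((A.induce S).E.filter (fun p => ¬ p.1 = x)).card
        ≤ (((A.L ∩ S).erase x) ×ˢ (A.R ∩ S)).card := Finset.card_le_card hrest
      _ = ((A.L ∩ S).card - 1) * (A.R ∩ S).card := by
          rw [Finset.card_product, Finset.card_erase_of_mem hmemx]
  have hdeg : ((A.induce S).E.filter (fun p => p.1 = x)).card = (A.induce S).deg x :=
    (deg_eq_left A S x hxL).symm
  have : (A.induce S).e ≤ (A.induce S).deg x + ((A.L ∩ S).card - 1) * (A.R ∩ S).card := by
    unfold BipGraph.e
    omega
  have := (Int.ofNat_le.mpr this)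
  push_cast [Nat.cast_sub hpos] at this ⊢
  linarith

lemma row_right (A : BipGraph V) (S : Finset V) (x : V) (hxR : x ∈ A.R) (hxS : x ∈ S) :
    ((A.induce S).e : ℤ) ≤ ((A.induce S).deg x : ℤ)
      + ((A.L ∩ S).card : ℤ) * (((A.R ∩ S).card : ℤ) - 1) := by
  have hsplit := Finset.card_filter_add_card_filter_not
    (s := (A.induce S).E) (p := fun p => p.2 = x)
  have hrest : ((A.induce S).E.filter (fun p => ¬ p.2 = x)) ⊆
      (A.L ∩ S) ×ˢ ((A.R ∩ S).erase x) := by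
    intro p hp
    rw [Finset.mem_filter] at hp
    have hm := (A.induce S).E_sub hp.1
    rw [Finset.mem_product] at hm ⊢
    exact ⟨hm.1, Finset.mem_erase.mpr ⟨hp.2, hm.2⟩⟩
  have hmemx : x ∈ A.R ∩ S := Finset.mem_inter.mpr ⟨hxR, hxS⟩
  have hpos : 1 ≤ (A.R ∩ S).card := Finset.card_pos.mpr ⟨x, hmemx⟩
  have h2 : ((A.induce S).E.filter (fun p => ¬ p.2 = x)).card ≤
      (A.L ∩ S).card * ((A.R ∩ S).card - 1) := by
    calc ((A.induce S).E.filter (fun p => ¬ p.2 = x)).card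
        ≤ ((A.L ∩ S) ×ˢ ((A.R ∩ S).erase x)).card := Finset.card_le_card hrest
      _ = (A.L ∩ S).card * ((A.R ∩ S).card - 1) := by
          rw [Finset.card_product, Finset.card_erase_of_mem hmemx]
  have hdeg : ((A.induce S).E.filter (fun p => p.2 = x)).card = (A.induce S).deg x :=
    (deg_eq_right A S x hxR).symm
  have : (A.induce S).e ≤ (A.induce S).deg x + (A.L ∩ S).card * ((A.R ∩ S).card - 1) := by
    unfold BipGraph.e
    omega
  have := (Int.ofNat_le.mpr this)
  push_cast [Nat.cast_sub hpos] at this ⊢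
  linarith

lemma e_erase (A : BipGraph V) (S : Finset V) (x : V) :
    (A.induce S).e ≤ (A.induce (S.erase x)).e + (A.induce S).deg x := by
  have hsub : (A.induce S).E ⊆ (A.induce (S.erase x)).E ∪
      (A.induce S).E.filter (fun p => p.1 = x ∨ p.2 = x) := by
    intro p hp
    by_cases h : p.1 = x ∨ p.2 = x
    · exact Finset.mem_union_right _ (Finset.mem_filter.mpr ⟨hp, h⟩)
    · push_neg at h
      apply Finset.mem_union_left
      simp only [BipGraph.induce, Finset.mem_filter, Finset.mem_erase] at hp ⊢
      exact ⟨hp.1, ⟨h.1, hp.2.1⟩, ⟨h.2, hp.2.2⟩⟩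
  calc (A.induce S).e ≤ ((A.induce (S.erase x)).E ∪
      (A.induce S).E.filter (fun p => p.1 = x ∨ p.2 = x)).card := Finset.card_le_card hsub
    _ ≤ (A.induce (S.erase x)).e + (A.induce S).deg x := Finset.card_union_le _ _

lemma L_inter_erase (A : BipGraph V) (S : Finset V) (x : V) :
    A.L ∩ (S.erase x) = (A.L ∩ S).erase x := by
  ext y
  simp only [Finset.mem_inter, Finset.mem_erase]
  tauto

lemma R_inter_erase_left (A : BipGraph V) (S : Finset V) (x : V) (hx : x ∈ A.L) :
    A.R ∩ (S.erase x) = A.R ∩ S := by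
  rw [show A.R ∩ (S.erase x) = (A.R ∩ S).erase x by ext y; simp only [Finset.mem_inter, Finset.mem_erase]; tauto]
  exact Finset.erase_eq_of_notMem (fun h =>
    Finset.disjoint_left.mp A.disj hx (Finset.mem_of_mem_inter_left h))

lemma L_inter_erase_right (A : BipGraph V) (S : Finset V) (x : V) (hx : x ∈ A.R) :
    A.L ∩ (S.erase x) = A.L ∩ S := by
  rw [show A.L ∩ (S.erase x) = (A.L ∩ S).erase x by ext y; simp only [Finset.mem_inter, Finset.mem_erase]; tauto]
  exact Finset.erase_eq_of_notMem (fun h =>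
    Finset.disjoint_right.mp A.disj hx (Finset.mem_of_mem_inter_left h))

end BipGraph
namespace BipGraph
variable {V : Type} [DecidableEq V]

lemma good_case (ℓ : ℕ) (A : BipGraph V) (S : Finset V)
    (hL1 : 100 * ((A.L ∩ S).card : ℤ) ≤ 101 * (ℓ : ℤ))
    (hL2 : 99 * (ℓ : ℤ) ≤ 100 * ((A.L ∩ S).card : ℤ))
    (hR1 : 100 * ((A.R ∩ S).card : ℤ) ≤ 101 * (ℓ : ℤ))
    (hR2 : 99 * (ℓ : ℤ) ≤ 100 * ((A.R ∩ S).card : ℤ))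
    (hdeg : ∀ x ∈ (A.induce S).verts, (0.9 : ℝ) * ℓ ≤ ((A.induce S).deg x : ℝ)) :
    BipGraph.AlmostComplete ℓ (A.induce S) := by
  refine ⟨?_, ?_, hdeg⟩
  · rw [show (A.induce S).L = A.L ∩ S from rfl, abs_le]
    have h1 := (@Int.cast_le ℝ _ _ _).mpr hL1
    have h2 := (@Int.cast_le ℝ _ _ _).mpr hL2
    push_cast at h1 h2
    constructor <;>
    · norm_num
      linarith
  · rw [show (A.induce S).R = A.R ∩ S from rfl, abs_le]
    have h1 := (@Int.cast_le ℝ _ _ _).mpr hR1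
    have h2 := (@Int.cast_le ℝ _ _ _).mpr hR2
    push_cast at h1 h2
    constructor <;>
    · norm_num
      linarith

end BipGraph
namespace BipGraph
variable {V : Type} [DecidableEq V]

lemma deg_nat_bound (ℓ : ℕ) (A : BipGraph V) (S : Finset V) (x : V)
    (h : ((A.induce S).deg x : ℝ) < 0.9 * ℓ) :
    10 * ((A.induce S).deg x : ℤ) < 9 * (ℓ : ℤ) := by
  have : ((10 * (A.induce S).deg x : ℕ) : ℝ) < ((9 * ℓ : ℕ) : ℝ) := by
    push_cast
    norm_num at h
    linarith
  exact_mod_cast this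

lemma core (ℓ N : ℕ) (hN : 100000000000000 * (N + 1) ≤ ℓ)
    (A : BipGraph V) :
    ∀ j : ℕ, ∀ S : Finset V, j ≤ ℓ / 200 →
      (ℓ : ℤ) - 2 * ((ℓ / 1000000 : ℕ) : ℤ) - (((ℓ / 200 : ℕ) : ℤ) - (j : ℤ)) ≤ ((A.L ∩ S).card : ℤ) →
      (ℓ : ℤ) - 2 * ((ℓ / 1000000 : ℕ) : ℤ) - (((ℓ / 200 : ℕ) : ℤ) - (j : ℤ)) ≤ ((A.R ∩ S).card : ℤ) →
      ((A.L ∩ S).card : ℤ) ≤ (ℓ : ℤ) + 2 * ((ℓ / 1000000 : ℕ) : ℤ) →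
      ((A.R ∩ S).card : ℤ) ≤ (ℓ : ℤ) + 2 * ((ℓ / 1000000 : ℕ) : ℤ) →
      ((A.L ∩ S).card : ℤ) * ((A.R ∩ S).card : ℤ) - ((A.induce S).e : ℤ)
        ≤ (j : ℤ) * ((ℓ / 20 : ℕ) : ℤ) →
      ∃ T : Finset V, BipGraph.AlmostComplete ℓ (A.induce T) := by
  intro j
  induction j with
  | zero =>
    intro S hj hLlo hRlo hLhi hRhi hM
    by_cases hbad : ∃ x ∈ (A.induce S).verts, ((A.induce S).deg x : ℝ) < 0.9 * ℓ
    · exfalso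
      obtain ⟨x, hxv, hxdeg⟩ := hbad
      have hdeg10 := deg_nat_bound ℓ A S x hxdeg
      rcases Finset.mem_union.mp hxv with hxm | hxm
      · have hxL : x ∈ A.L := Finset.mem_of_mem_inter_left hxm
        have hxS : x ∈ S := Finset.mem_of_mem_inter_right hxm
        have hrow := row_left A S x hxL hxS
        have hexp : (((A.L ∩ S).card : ℤ) - 1) * ((A.R ∩ S).card : ℤ)
            = ((A.L ∩ S).card : ℤ) * ((A.R ∩ S).card : ℤ) - ((A.R ∩ S).card : ℤ) := by ring
        have hkey : ((A.R ∩ S).card : ℤ) ≤ ((A.induce S).deg x : ℤ) := by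
          push_cast at hM
          linarith
        omega
      · have hxR : x ∈ A.R := Finset.mem_of_mem_inter_left hxm
        have hxS : x ∈ S := Finset.mem_of_mem_inter_right hxm
        have hrow := row_right A S x hxR hxS
        have hexp : ((A.L ∩ S).card : ℤ) * (((A.R ∩ S).card : ℤ) - 1)
            = ((A.L ∩ S).card : ℤ) * ((A.R ∩ S).card : ℤ) - ((A.L ∩ S).card : ℤ) := by ring
        have hkey : ((A.L ∩ S).card : ℤ) ≤ ((A.induce S).deg x : ℤ) := by
          push_cast at hM
          linarith
        omega
    · push_neg at hbad
      exact ⟨S, good_case ℓ A S (by omega) (by omega) (by omega) (by omega) hbad⟩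
  | succ j ih =>
    intro S hj hLlo hRlo hLhi hRhi hM
    by_cases hbad : ∃ x ∈ (A.induce S).verts, ((A.induce S).deg x : ℝ) < 0.9 * ℓ
    · obtain ⟨x, hxv, hxdeg⟩ := hbad
      have hdeg10 := deg_nat_bound ℓ A S x hxdeg
      have heer := e_erase A S x
      have heerz : ((A.induce S).e : ℤ) ≤ ((A.induce (S.erase x)).e : ℤ)
          + ((A.induce S).deg x : ℤ) := by exact_mod_cast heer
      rcases Finset.mem_union.mp hxv with hxm | hxm
      · -- x on the left side
        have hxL : x ∈ A.L := Finset.mem_of_mem_inter_left hxm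
        have hxS : x ∈ S := Finset.mem_of_mem_inter_right hxm
        have hLe : A.L ∩ (S.erase x) = (A.L ∩ S).erase x := L_inter_erase A S x
        have hRe : A.R ∩ (S.erase x) = A.R ∩ S := R_inter_erase_left A S x hxL
        have hxm' : x ∈ A.L ∩ S := Finset.mem_inter.mpr ⟨hxL, hxS⟩
        have hcard : ((A.L ∩ (S.erase x)).card : ℤ) = ((A.L ∩ S).card : ℤ) - 1 := by
          rw [hLe, Finset.card_erase_of_mem hxm']
          have : 1 ≤ (A.L ∩ S).card := Finset.card_pos.mpr ⟨x, hxm'⟩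
          push_cast [Nat.cast_sub this]
          ring
        have hkey : ((A.R ∩ S).card : ℤ) - ((A.induce S).deg x : ℤ)
            ≥ ((ℓ / 20 : ℕ) : ℤ) := by omega
        refine ih (S.erase x) (by omega) ?_ ?_ ?_ ?_ ?_
        · rw [hcard]; push_cast at hLlo ⊢; linarith
        · rw [hRe]; push_cast at hRlo ⊢; linarith
        · rw [hcard]; linarith
        · rw [hRe]; linarith
        · rw [hcard, hRe]
          have hexp : (((A.L ∩ S).card : ℤ) - 1) * ((A.R ∩ S).card : ℤ)
              = ((A.L ∩ S).card : ℤ) * ((A.R ∩ S).card : ℤ) - ((A.R ∩ S).card : ℤ) := by ring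
          have hj1 : ((j + 1 : ℕ) : ℤ) = (j : ℤ) + 1 := by push_cast; ring
          rw [hj1] at hM
          linarith
      · -- x on the right side
        have hxR : x ∈ A.R := Finset.mem_of_mem_inter_left hxm
        have hxS : x ∈ S := Finset.mem_of_mem_inter_right hxm
        have hRe : A.R ∩ (S.erase x) = (A.R ∩ S).erase x := by
          ext y
          simp only [Finset.mem_inter, Finset.mem_erase]
          tauto
        have hLe : A.L ∩ (S.erase x) = A.L ∩ S := L_inter_erase_right A S x hxR
        have hxm' : x ∈ A.R ∩ S := Finset.mem_inter.mpr ⟨hxR, hxS⟩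
        have hcard : ((A.R ∩ (S.erase x)).card : ℤ) = ((A.R ∩ S).card : ℤ) - 1 := by
          rw [hRe, Finset.card_erase_of_mem hxm']
          have : 1 ≤ (A.R ∩ S).card := Finset.card_pos.mpr ⟨x, hxm'⟩
          push_cast [Nat.cast_sub this]
          ring
        have hkey : ((A.L ∩ S).card : ℤ) - ((A.induce S).deg x : ℤ)
            ≥ ((ℓ / 20 : ℕ) : ℤ) := by omega
        refine ih (S.erase x) (by omega) ?_ ?_ ?_ ?_ ?_
        · rw [hLe]; push_cast at hLlo ⊢; linarith
        · rw [hcard]; push_cast at hRlo ⊢; linarith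
        · rw [hLe]; linarith
        · rw [hcard]; linarith
        · rw [hcard, hLe]
          have hexp : ((A.L ∩ S).card : ℤ) * (((A.R ∩ S).card : ℤ) - 1)
              = ((A.L ∩ S).card : ℤ) * ((A.R ∩ S).card : ℤ) - ((A.L ∩ S).card : ℤ) := by ring
          have hj1 : ((j + 1 : ℕ) : ℤ) = (j : ℤ) + 1 := by push_cast; ring
          rw [hj1] at hM
          linarith
    · push_neg at hbad
      exact ⟨S, good_case ℓ A S (by omega) (by omega) (by omega) (by omega) hbad⟩

end BipGraph

namespace BipGraph
variable {V : Type} [DecidableEq V]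

lemma inter_verts_L (A : BipGraph V) : A.L ∩ A.verts = A.L :=
  Finset.inter_eq_left.mpr Finset.subset_union_left

lemma inter_verts_R (A : BipGraph V) : A.R ∩ A.verts = A.R :=
  Finset.inter_eq_left.mpr Finset.subset_union_right

lemma induce_verts_e (A : BipGraph V) : (A.induce A.verts).e = A.e := by
  unfold BipGraph.e
  congr 1
  apply Finset.filter_true_of_mem
  intro p hp
  have hm := A.E_sub hp
  rw [Finset.mem_product] at hm
  exact ⟨Finset.mem_union_left _ hm.1, Finset.mem_union_right _ hm.2⟩

lemma e_le (A : BipGraph V) : (A.e : ℤ) ≤ (A.L.card : ℤ) * (A.R.card : ℤ) := by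
  have : A.e ≤ A.L.card * A.R.card := by
    rw [← Finset.card_product]
    exact Finset.card_le_card A.E_sub
  exact_mod_cast this

end BipGraph


set_option maxHeartbeats 1000000 in
/-- for every `N` there is `ℓ₀` such that for all `ℓ ≥ ℓ₀`, every
bipartite graph with at most `2ℓ + N` vertices and at least `ℓ² − N` edges contains
an induced subgraph that is almost `ℓ`-complete. -/
theorem almost_complete_subgraph (N : ℕ) :
    ∃ ℓ₀ : ℕ, ∀ ℓ : ℕ, ℓ₀ ≤ ℓ →
      ∀ (V : Type) [DecidableEq V] (A : BipGraph V),
        A.v ≤ 2 * ℓ + N → (ℓ : ℤ) ^ 2 - (N : ℤ) ≤ (A.e : ℤ) →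
        ∃ S : Finset V, BipGraph.AlmostComplete ℓ (A.induce S) := by
  refine ⟨100000000000000 * (N + 1), fun ℓ hℓ V _ A hv he => ?_⟩
  have hq1 : (1000000 : ℤ) * ((ℓ / 1000000 : ℕ) : ℤ) ≤ (ℓ : ℤ) := by
    have : 1000000 * (ℓ / 1000000) ≤ ℓ := by omega
    exact_mod_cast this
  have hq0 : (0 : ℤ) ≤ ((ℓ / 1000000 : ℕ) : ℤ) := Int.ofNat_nonneg _
  have hd1 : (ℓ : ℤ) - 199 ≤ 200 * ((ℓ / 200 : ℕ) : ℤ) := by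
    have h : ℓ ≤ 200 * (ℓ / 200) + 199 := by omega
    have h2 : (ℓ : ℤ) ≤ 200 * ((ℓ / 200 : ℕ) : ℤ) + 199 := by exact_mod_cast h
    linarith
  have hb1 : (ℓ : ℤ) - 19 ≤ 20 * ((ℓ / 20 : ℕ) : ℤ) := by
    have h : ℓ ≤ 20 * (ℓ / 20) + 19 := by omega
    have h2 : (ℓ : ℤ) ≤ 20 * ((ℓ / 20 : ℕ) : ℤ) + 19 := by exact_mod_cast h
    linarith
  have hNq : (N : ℤ) ≤ ((ℓ / 1000000 : ℕ) : ℤ) := by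
    have : N ≤ ℓ / 1000000 := by omega
    exact_mod_cast this
  have h14 : (100000000000000 : ℤ) ≤ (ℓ : ℤ) := by
    have : 100000000000000 ≤ ℓ := by omega
    exact_mod_cast this
  have hq2 : (N : ℤ) * ((ℓ : ℤ) + 1) ≤ ((ℓ / 1000000 : ℕ) : ℤ) * ((ℓ / 1000000 : ℕ) : ℤ) := by
    have h1 : N * (ℓ + 1) ≤ (ℓ / 1000000) * (ℓ / 1000000) := by
      have h0 : 2000000 * N ≤ ℓ / 1000000 := by omega
      have h1u : 1 ≤ ℓ / 1000000 := by omega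
      have hlu : ℓ + 1 ≤ 1000000 * (ℓ / 1000000) + 1000000 := by omega
      have e1 : N * (ℓ + 1) ≤ N * (1000000 * (ℓ / 1000000) + 1000000) :=
        Nat.mul_le_mul_left N hlu
      have e2 : 2000000 * N * (ℓ / 1000000) ≤ (ℓ / 1000000) * (ℓ / 1000000) :=
        Nat.mul_le_mul_right (ℓ / 1000000) h0
      have e3 : N ≤ N * (ℓ / 1000000) := Nat.le_mul_of_pos_right N (by omega)
      nlinarith [e1, e2, e3]
    exact_mod_cast h1
  -- global size facts
  have hsum : (A.L.card : ℤ) + (A.R.card : ℤ) ≤ 2 * ℓ + N := by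
    have hunion : A.L.card + A.R.card = A.v := by
      unfold BipGraph.v BipGraph.verts
      rw [Finset.card_union_of_disjoint A.disj]
    have : A.L.card + A.R.card ≤ 2 * ℓ + N := by omega
    exact_mod_cast this
  have hprod : (ℓ : ℤ) ^ 2 - N ≤ (A.L.card : ℤ) * (A.R.card : ℤ) :=
    he.trans (BipGraph.e_le A)
  have hL0 : (0 : ℤ) ≤ (A.L.card : ℤ) := Int.ofNat_nonneg _
  have hR0 : (0 : ℤ) ≤ (A.R.card : ℤ) := Int.ofNat_nonneg _
  have hLlow : (ℓ : ℤ) - ((ℓ / 1000000 : ℕ) : ℤ) ≤ (A.L.card : ℤ) := by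
    by_contra hcon
    push_neg at hcon
    have ht : ((ℓ / 1000000 : ℕ) : ℤ) + 1 ≤ (ℓ : ℤ) - A.L.card := by linarith
    have key : (A.L.card : ℤ) * (A.R.card : ℤ) ≤ (A.L.card : ℤ) * (2 * ℓ + N - A.L.card) :=
      mul_le_mul_of_nonneg_left (by linarith) hL0
    nlinarith [mul_le_mul ht ht (by positivity) (by linarith),
      mul_nonneg (Int.ofNat_nonneg N) (by linarith : (0:ℤ) ≤ (ℓ:ℤ) - A.L.card)]
  have hRlow : (ℓ : ℤ) - ((ℓ / 1000000 : ℕ) : ℤ) ≤ (A.R.card : ℤ) := by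
    by_contra hcon
    push_neg at hcon
    have ht : ((ℓ / 1000000 : ℕ) : ℤ) + 1 ≤ (ℓ : ℤ) - A.R.card := by linarith
    have key : (A.L.card : ℤ) * (A.R.card : ℤ) ≤ (2 * ℓ + N - A.R.card) * (A.R.card : ℤ) :=
      mul_le_mul_of_nonneg_right (by linarith) hR0
    nlinarith [mul_le_mul ht ht (by positivity) (by linarith),
      mul_nonneg (Int.ofNat_nonneg N) (by linarith : (0:ℤ) ≤ (ℓ:ℤ) - A.R.card)]
  have hLhigh : (A.L.card : ℤ) ≤ (ℓ : ℤ) + 2 * ((ℓ / 1000000 : ℕ) : ℤ) := by linarith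
  have hRhigh : (A.R.card : ℤ) ≤ (ℓ : ℤ) + 2 * ((ℓ / 1000000 : ℕ) : ℤ) := by linarith
  have hM : (A.L.card : ℤ) * (A.R.card : ℤ) - (A.e : ℤ)
      ≤ ((ℓ / 200 : ℕ) : ℤ) * ((ℓ / 20 : ℕ) : ℤ) := by
    have hub : (A.L.card : ℤ) * (A.R.card : ℤ)
        ≤ ((ℓ : ℤ) + 2 * ((ℓ / 1000000 : ℕ) : ℤ)) * ((ℓ : ℤ) + 2 * ((ℓ / 1000000 : ℕ) : ℤ)) :=
      mul_le_mul hLhigh hRhigh hR0 (by linarith)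
    have hdb : ((ℓ : ℤ) - 199) * ((ℓ : ℤ) - 19)
        ≤ (200 * ((ℓ / 200 : ℕ) : ℤ)) * (20 * ((ℓ / 20 : ℕ) : ℤ)) :=
      mul_le_mul hd1 hb1 (by linarith) (by positivity)
    have hq1Q : 1000000 * ((ℓ / 1000000 : ℕ) : ℤ) * ((ℓ / 1000000 : ℕ) : ℤ)
        ≤ (ℓ : ℤ) * ((ℓ / 1000000 : ℕ) : ℤ) := mul_le_mul_of_nonneg_right hq1 hq0
    have hq1l : 1000000 * ((ℓ / 1000000 : ℕ) : ℤ) * (ℓ : ℤ) ≤ (ℓ : ℤ) * (ℓ : ℤ) :=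
      mul_le_mul_of_nonneg_right hq1 (by linarith : (0:ℤ) ≤ (ℓ:ℤ))
    have h14l : (100000000000000 : ℤ) * (ℓ : ℤ) ≤ (ℓ : ℤ) * (ℓ : ℤ) :=
      mul_le_mul_of_nonneg_right h14 (by linarith : (0:ℤ) ≤ (ℓ:ℤ))
    linarith [hub, hdb, hq1Q, hq1l, h14l, he, hNq]
  obtain ⟨T, hT⟩ := BipGraph.core ℓ N hℓ A (ℓ / 200) A.verts (le_refl _)
    (by rw [BipGraph.inter_verts_L]; linarith)
    (by rw [BipGraph.inter_verts_R]; linarith)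
    (by rw [BipGraph.inter_verts_L]; linarith)
    (by rw [BipGraph.inter_verts_R]; linarith)
    (by rw [BipGraph.inter_verts_L, BipGraph.inter_verts_R, BipGraph.induce_verts_e]; linarith)
  exact ⟨T, hT⟩
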